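/- Special case of the main theorem for entropy: Let (X,d,T) be a compact dynamical system with the specification property and z₀ a non-transitive point. Then either E(z₀) = ∅ or the Bowen topological entropy of E(z₀) equals the topological entropy of T: h^B(T, E(z₀)) = h_top(T). -/

import Mathlib

open Filter Set Metric Topology MeasureTheory
open scoped ENNReal NNReal

noncomputable section

/-- Birkhoff sum `S_n φ(x)`. -/
def birkhoff {X : Type*} (T : X → X) (φ : X → ℝ) (n : ℕ) (x : X) : ℝ :=
  ∑ i ∈ Finset.range n, φ (T^[i] x)

/-- Bowen ball `B_n(x, ε)`. -/
def bowenBall {X : Type*} [PseudoMetricSpace X] (T : X → X) (n : ℕ) (x : X) (ε : ℝ) : Set X :=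
  {y | ∀ i < n, dist (T^[i] x) (T^[i] y) < ε}

/-- The quantity `M(Z, t, φ, n, ε)` of Pesin–Pitskel: infimum over countable covers of `Z`
by Bowen balls `B_m(x,ε)` with `m ≥ n` of `Σ exp(-t m + sup_{B_m(x,ε)} S_m φ)`. -/
def ppM {X : Type*} [PseudoMetricSpace X] (T : X → X) (φ : X → ℝ) (Z : Set X)
    (t : ℝ) (n : ℕ) (ε : ℝ) : ℝ≥0∞ :=
  ⨅ (c : ℕ → ℕ × X) (_ : ∀ i, n ≤ (c i).1)
    (_ : Z ⊆ ⋃ i, bowenBall T (c i).1 (c i).2 ε),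
    ∑' i, ENNReal.ofReal (Real.exp (-t * (c i).1 +
      sSup ((birkhoff T φ (c i).1) '' bowenBall T (c i).1 (c i).2 ε)))

/-- `M(Z,t,φ,ε) = lim_{n→∞} M(Z,t,φ,n,ε)` (a monotone limit, hence a supremum). -/
def ppMlim {X : Type*} [PseudoMetricSpace X] (T : X → X) (φ : X → ℝ) (Z : Set X)
    (t : ℝ) (ε : ℝ) : ℝ≥0∞ :=
  ⨆ n : ℕ, ppM T φ Z t n ε

/-- Pesin–Pitskel pressure at scale `ε`: `P(Z,φ,ε) = inf {t : M(Z,t,φ,ε) = 0}`. -/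
def ppPressureAt {X : Type*} [PseudoMetricSpace X] (T : X → X) (φ : X → ℝ) (Z : Set X)
    (ε : ℝ) : ℝ :=
  sInf {t : ℝ | ppMlim T φ Z t ε = 0}

/-- Pesin–Pitskel topological pressure `P(Z,φ) = lim_{ε→0} P(Z,φ,ε)`. -/
def ppPressure {X : Type*} [PseudoMetricSpace X] (T : X → X) (φ : X → ℝ) (Z : Set X) : ℝ :=
  limsup (fun ε => ppPressureAt T φ Z ε) (𝓝[>] (0 : ℝ))

/-- `E` is an `(n,ε)`-separated set for `T`. -/
def IsSep {X : Type*} [PseudoMetricSpace X] (T : X → X) (n : ℕ) (ε : ℝ) (E : Set X) : Prop :=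
  ∀ x ∈ E, ∀ y ∈ E, x ≠ y → ∃ i < n, ε < dist (T^[i] x) (T^[i] y)

/-- `P(φ, n, ε)`: supremum of `Σ_{x∈E} e^{S_n φ(x)}` over `(n,ε)`-separated sets `E`. -/
def sepSum {X : Type*} [PseudoMetricSpace X] (T : X → X) (φ : X → ℝ) (n : ℕ) (ε : ℝ) : ℝ :=
  sSup {r : ℝ | ∃ E : Finset X, IsSep T n ε ↑E ∧ r = ∑ x ∈ E, Real.exp (birkhoff T φ n x)}

/-- Classical topological pressure via separated sets. -/
def Ptop {X : Type*} [PseudoMetricSpace X] (T : X → X) (φ : X → ℝ) : ℝ :=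
  limsup (fun ε => limsup (fun n : ℕ => Real.log (sepSum T φ n ε) / n) atTop) (𝓝[>] (0 : ℝ))

/-- The specification property. -/
def Specification {X : Type*} [PseudoMetricSpace X] (T : X → X) : Prop :=
  ∀ ε : ℝ, 0 < ε → ∃ m : ℕ, ∀ (k : ℕ) (a b : Fin k → ℕ) (xs : Fin k → X),
    (∀ j, a j ≤ b j) →
    (∀ (j : ℕ) (h : j + 1 < k), b ⟨j, Nat.lt_of_succ_lt h⟩ + m ≤ a ⟨j + 1, h⟩) →
    ∃ x : X, ∀ j : Fin k, ∀ p ≤ b j - a j, dist (T^[p + a j] x) (T^[p] (xs j)) < ε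

/-- The non-dense orbit set `E(z₀)`. -/
def Eset {X : Type*} [TopologicalSpace X] (T : X → X) (z₀ : X) : Set X :=
  {x | z₀ ∉ closure (Set.range fun n : ℕ => T^[n] x)}

end
noncomputable section
namespace Stmt7

open Filter Set Metric Topology
open scoped ENNReal

set_option linter.unusedSectionVars false

variable {X : Type*} [MetricSpace X] [CompactSpace X] (T : X → X)

/-- The set of cardinalities of `(n,ε)`-separated finite sets. -/
def cardSet (n : ℕ) (ε : ℝ) : Set ℕ :=
  {c | ∃ E : Finset X, IsSep T n ε ↑E ∧ E.card = c}

/-- Maximal cardinality of an `(n,ε)`-separated set. -/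
def maxcard (n : ℕ) (ε : ℝ) : ℕ := sSup (cardSet T n ε)

lemma cardSet_nonempty (n : ℕ) (ε : ℝ) : (cardSet T n ε).Nonempty := by
  refine ⟨0, ∅, ?_, by simp⟩
  intro x hx; simp at hx

/-- Uniform cardinality bound for separated sets: `card E ≤ K ^ n`. -/
lemma exists_card_bound {ε : ℝ} (hε : 0 < ε) :
    ∃ K : ℕ, 1 ≤ K ∧ ∀ (n : ℕ) (E : Finset X), IsSep T n ε ↑E → E.card ≤ K ^ n := by
  obtain ⟨s, hs⟩ : ∃ s : Finset X, (Set.univ : Set X) ⊆ ⋃ c ∈ s, Metric.ball c (ε / 2) := by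
    obtain ⟨s, -, hfin, hs⟩ := IsCompact.elim_finite_subcover_image isCompact_univ
      (fun c (_ : c ∈ (Set.univ : Set X)) => isOpen_ball (x := c) (ε := ε / 2))
      (fun x _ => Set.mem_biUnion (Set.mem_univ x) (mem_ball_self (by linarith)))
    obtain ⟨t, rfl⟩ := hfin.exists_finset_coe
    exact ⟨t, hs⟩
  classical
  refine ⟨s.card + 1, by omega, fun n E hE => ?_⟩
  -- itinerary map
  have hcover : ∀ x : X, ∃ c ∈ s, x ∈ Metric.ball c (ε / 2) := by
    intro x
    have := hs (Set.mem_univ x)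
    simpa using this
  choose f hfs hfb using hcover
  have hinj : Set.InjOn (fun x => (fun i : Fin n => (⟨f (T^[(i : ℕ)] x), hfs _⟩ : {c // c ∈ s})))
      (↑E : Set X) := by
    intro x hx y hy hxy
    by_contra hne
    obtain ⟨i, hi, hd⟩ := hE x hx y hy hne
    have h1 := hfb (T^[i] x)
    have h2 := hfb (T^[i] y)
    have : f (T^[i] x) = f (T^[i] y) := by
      have := congrFun hxy (⟨i, hi⟩ : Fin n)
      simpa using this
    rw [this] at h1
    have : dist (T^[i] x) (T^[i] y) < ε := by
      have := dist_triangle (T^[i] x) (f (T^[i] y)) (T^[i] y)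
      simp only [mem_ball] at h1 h2
      have h2' : dist (f (T^[i] y)) (T^[i] y) < ε / 2 := by rw [dist_comm]; exact h2
      linarith
    linarith
  have := Finset.card_le_card_of_injOn _ (fun a _ => Finset.mem_univ _) hinj
  calc E.card ≤ (Finset.univ : Finset (Fin n → {c // c ∈ s})).card := this
    _ = s.card ^ n := by simp [Finset.card_univ, Fintype.card_fun]
    _ ≤ (s.card + 1) ^ n := Nat.pow_le_pow_left (by omega) n

lemma cardSet_bddAbove {n : ℕ} {ε : ℝ} (hε : 0 < ε) : BddAbove (cardSet T n ε) := by
  obtain ⟨K, -, hK⟩ := exists_card_bound T hε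
  exact ⟨K ^ n, fun c ⟨E, hE, hc⟩ => hc ▸ hK n E hE⟩

lemma maxcard_mem {n : ℕ} {ε : ℝ} (hε : 0 < ε) :
    ∃ E : Finset X, IsSep T n ε ↑E ∧ E.card = maxcard T n ε :=
  Nat.sSup_mem (cardSet_nonempty T n ε) (cardSet_bddAbove T hε)

lemma le_maxcard {n : ℕ} {ε : ℝ} (hε : 0 < ε) {E : Finset X} (hE : IsSep T n ε ↑E) :
    E.card ≤ maxcard T n ε :=
  le_csSup (cardSet_bddAbove T hε) ⟨E, hE, rfl⟩

lemma one_le_maxcard [Nonempty X] {n : ℕ} {ε : ℝ} (hε : 0 < ε) : 1 ≤ maxcard T n ε := by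
  obtain ⟨x⟩ := ‹Nonempty X›
  have : IsSep T n ε ↑({x} : Finset X) := by
    intro a ha b hb hab
    simp only [Finset.coe_singleton, Set.mem_singleton_iff] at ha hb
    exact absurd (ha.trans hb.symm) hab
  simpa using le_maxcard T hε this

/-- for `φ = 0`, `sepSum` is the maximal cardinality. -/
lemma sepSum_eq_maxcard [Nonempty X] {n : ℕ} {ε : ℝ} (hε : 0 < ε) :
    sepSum T (fun _ => (0 : ℝ)) n ε = (maxcard T n ε : ℝ) := by
  have hbk : ∀ (k : ℕ) (x : X), birkhoff T (fun _ => (0:ℝ)) k x = 0 := by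
    intro k x; simp [birkhoff]
  have hset : {r : ℝ | ∃ E : Finset X, IsSep T n ε ↑E ∧
      r = ∑ x ∈ E, Real.exp (birkhoff T (fun _ => (0:ℝ)) n x)}
      = {r : ℝ | ∃ E : Finset X, IsSep T n ε ↑E ∧ r = (E.card : ℝ)} := by
    ext r
    constructor
    · rintro ⟨E, hE, rfl⟩; exact ⟨E, hE, by simp [hbk]⟩
    · rintro ⟨E, hE, rfl⟩; exact ⟨E, hE, by simp [hbk]⟩
  rw [sepSum, hset]
  have hgr : IsGreatest {r : ℝ | ∃ E : Finset X, IsSep T n ε ↑E ∧ r = (E.card : ℝ)}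
      ((maxcard T n ε : ℕ) : ℝ) := by
    constructor
    · obtain ⟨E, hE, hc⟩ := maxcard_mem T (n := n) hε
      exact ⟨E, hE, by rw [hc]⟩
    · rintro r ⟨E, hE, rfl⟩
      exact_mod_cast le_maxcard T hε hE
  exact hgr.csSup_eq

lemma maxcard_antitone {n : ℕ} {ε ε' : ℝ} (hε : 0 < ε) (h : ε ≤ ε') :
    maxcard T n ε' ≤ maxcard T n ε := by
  rcases cardSet_nonempty T n ε' with h0
  refine csSup_le (cardSet_nonempty T n ε') ?_
  rintro c ⟨E, hE, rfl⟩
  refine le_maxcard T hε fun x hx y hy hxy => ?_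
  obtain ⟨i, hi, hd⟩ := hE x hx y hy hxy
  exact ⟨i, hi, lt_of_le_of_lt h hd⟩

end Stmt7
namespace Stmt7
open Filter Set Metric Topology

variable {X : Type*} [MetricSpace X] [CompactSpace X] (T : X → X)

/-- Scale-`ε` entropy: inner limsup in `Ptop` for `φ = 0`. -/
def hsc (ε : ℝ) : ℝ :=
  limsup (fun n : ℕ => Real.log (sepSum T (fun _ => (0 : ℝ)) n ε) / n) atTop

lemma seq_bounds [Nonempty X] {ε : ℝ} (hε : 0 < ε) :
    ∃ R : ℝ, 0 ≤ R ∧ ∀ n : ℕ,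
      Real.log (sepSum T (fun _ => (0 : ℝ)) n ε) / n ∈ Set.Icc (0 : ℝ) R := by
  obtain ⟨K, hK1, hK⟩ := exists_card_bound T (ε := ε) hε
  refine ⟨Real.log K, Real.log_nonneg (by exact_mod_cast hK1), fun n => ?_⟩
  rw [sepSum_eq_maxcard T hε]
  have h1 : (1 : ℝ) ≤ (maxcard T n ε : ℝ) := by exact_mod_cast one_le_maxcard T hε
  have hKn : (maxcard T n ε : ℝ) ≤ (K : ℝ) ^ n := by
    obtain ⟨E, hE, hc⟩ := maxcard_mem T (n := n) hε
    exact_mod_cast hc ▸ hK n E hE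
  have hlog0 : 0 ≤ Real.log (maxcard T n ε) := Real.log_nonneg h1
  constructor
  · positivity
  · rcases Nat.eq_zero_or_pos n with rfl | hn
    · simpa using Real.log_nonneg (by exact_mod_cast hK1)
    · have hlogK : Real.log (maxcard T n ε) ≤ n * Real.log K := by
        calc Real.log (maxcard T n ε) ≤ Real.log ((K : ℝ) ^ n) :=
              Real.log_le_log (by linarith) hKn
          _ = n * Real.log K := by rw [Real.log_pow]
      rw [div_le_iff₀ (by exact_mod_cast hn)]
      linarith [mul_comm (Real.log K) (n : ℝ)]

lemma seq_isBounded [Nonempty X] {ε : ℝ} (hε : 0 < ε) :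
    IsBoundedUnder (· ≤ ·) atTop
      (fun n : ℕ => Real.log (sepSum T (fun _ => (0 : ℝ)) n ε) / n) := by
  obtain ⟨R, -, hR⟩ := seq_bounds T hε
  exact isBoundedUnder_of ⟨R, fun n => (hR n).2⟩

lemma seq_isCobounded [Nonempty X] {ε : ℝ} (hε : 0 < ε) :
    IsCoboundedUnder (· ≤ ·) atTop
      (fun n : ℕ => Real.log (sepSum T (fun _ => (0 : ℝ)) n ε) / n) := by
  obtain ⟨R, -, hR⟩ := seq_bounds T hε
  exact IsBoundedUnder.isCoboundedUnder_le (isBoundedUnder_of ⟨0, fun n => (hR n).1⟩)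

lemma hsc_nonneg [Nonempty X] {ε : ℝ} (hε : 0 < ε) : 0 ≤ hsc T ε := by
  obtain ⟨R, -, hR⟩ := seq_bounds T hε
  refine le_limsup_of_frequently_le (Frequently.of_forall fun n => (hR n).1)
    (seq_isBounded T hε)

lemma hsc_antitone [Nonempty X] {ε ε' : ℝ} (hε : 0 < ε) (h : ε ≤ ε') :
    hsc T ε' ≤ hsc T ε := by
  have hε' : 0 < ε' := lt_of_lt_of_le hε h
  refine limsup_le_limsup (Eventually.of_forall fun n => ?_)
    (seq_isCobounded T hε') (seq_isBounded T hε)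
  simp only
  rw [sepSum_eq_maxcard T hε, sepSum_eq_maxcard T hε']
  have h1 : (1 : ℝ) ≤ (maxcard T n ε' : ℝ) := by exact_mod_cast one_le_maxcard T hε'
  have hm : (maxcard T n ε' : ℝ) ≤ (maxcard T n ε : ℝ) := by
    exact_mod_cast maxcard_antitone T hε h
  have hlog : Real.log (maxcard T n ε') ≤ Real.log (maxcard T n ε) :=
    Real.log_le_log (by linarith) hm
  gcongr

end Stmt7
namespace Stmt7
open Filter Set Metric Topology
open scoped ENNReal

set_option linter.unusedSectionVars false

variable {X : Type*} [MetricSpace X] [CompactSpace X] (T : X → X)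

lemma birkhoff_zero (k : ℕ) : birkhoff T (fun _ => (0 : ℝ)) k = fun _ => (0 : ℝ) := by
  funext x; simp [birkhoff]

lemma sSup_birkhoff_zero (k : ℕ) (S : Set X) :
    sSup ((birkhoff T (fun _ => (0 : ℝ)) k) '' S) = 0 := by
  rw [birkhoff_zero]
  rcases S.eq_empty_or_nonempty with rfl | hS
  · simp [Real.sSup_empty]
  · rw [hS.image_const]; exact csSup_singleton 0

/-- The generic summand of `ppM` for `φ = 0`. -/
lemma ppM_term_eq (t : ℝ) (k : ℕ) (x : X) (ε : ℝ) :
    ENNReal.ofReal (Real.exp (-t * k +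
        sSup ((birkhoff T (fun _ => (0 : ℝ)) k) '' bowenBall T k x ε)))
      = ENNReal.ofReal (Real.exp (-t * k)) := by
  rw [sSup_birkhoff_zero, add_zero]

/-- If `t ≤ 0` then `ppMlim` is `⊤`. -/
lemma ppMlim_eq_top_of_nonpos {t : ℝ} (ht : t ≤ 0) (Z : Set X) (ε : ℝ) :
    ppMlim T (fun _ => (0 : ℝ)) Z t ε = ⊤ := by
  rw [ppMlim, eq_top_iff]
  refine le_trans ?_ (le_iSup _ 0)
  rw [ppM, le_iInf_iff]
  intro c
  rw [le_iInf_iff]; intro hc1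
  rw [le_iInf_iff]; intro hc2
  have h1 : ∀ i : ℕ, (1 : ℝ≥0∞) ≤ ENNReal.ofReal (Real.exp (-t * (c i).1 +
      sSup ((birkhoff T (fun _ => (0 : ℝ)) (c i).1) '' bowenBall T (c i).1 (c i).2 ε))) := by
    intro i
    rw [ppM_term_eq]
    rw [show (1 : ℝ≥0∞) = ENNReal.ofReal (Real.exp 0) by simp]
    refine ENNReal.ofReal_le_ofReal (Real.exp_le_exp.2 ?_)
    have : (0:ℝ) ≤ (c i).1 := Nat.cast_nonneg _
    nlinarith
  calc (⊤ : ℝ≥0∞) = ∑' _ : ℕ, (1 : ℝ≥0∞) :=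
        (ENNReal.tsum_const_eq_top_of_ne_zero one_ne_zero).symm
    _ ≤ _ := ENNReal.tsum_le_tsum h1

/-- A maximal `(N, ε/2)`-separated set gives a cover of `X` by Bowen `ε`-balls. -/
lemma exists_spanning {ε : ℝ} (hε : 0 < ε) (N : ℕ) :
    ∃ E : Finset X, IsSep T N (ε/2) ↑E ∧ E.card = maxcard T N (ε/2) ∧
      (Set.univ : Set X) ⊆ ⋃ x ∈ E, bowenBall T N x ε := by
  classical
  have hε2 : (0:ℝ) < ε/2 := by linarith
  obtain ⟨E, hE, hcard⟩ := maxcard_mem T (n := N) hε2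
  refine ⟨E, hE, hcard, fun y _ => ?_⟩
  by_cases hy : ∃ x ∈ E, ∀ i < N, dist (T^[i] x) (T^[i] y) ≤ ε/2
  · obtain ⟨x, hx, hd⟩ := hy
    exact Set.mem_biUnion hx (fun i hi => lt_of_le_of_lt (hd i hi) (by linarith))
  · exfalso
    push_neg at hy
    have hyE : y ∉ E := by
      intro hyE
      obtain ⟨i, hi, hd⟩ := hy y hyE
      simp only [dist_self] at hd
      linarith
    have hsep : IsSep T N (ε/2) ↑(insert y E) := by
      intro a ha b hb hab
      simp only [Finset.coe_insert, Set.mem_insert_iff] at ha hb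
      rcases ha with rfl | ha
      · rcases hb with rfl | hb
        · exact absurd rfl hab
        · obtain ⟨i, hi, hd⟩ := hy b hb
          exact ⟨i, hi, by rwa [dist_comm]⟩
      · rcases hb with rfl | hb
        · obtain ⟨i, hi, hd⟩ := hy a ha
          exact ⟨i, hi, hd⟩
        · exact hE a ha b hb hab
    have := le_maxcard T hε2 hsep
    rw [Finset.card_insert_of_notMem hyE, hcard] at this
    omega

end Stmt7
namespace Stmt7
open Filter Set Metric Topology
open scoped ENNReal

set_option linter.unusedSectionVars false

variable {X : Type*} [MetricSpace X] [CompactSpace X] (T : X → X)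

lemma ofReal_exp_pow (x : ℝ) (k : ℕ) :
    ENNReal.ofReal (Real.exp ((k:ℝ) * x)) = (ENNReal.ofReal (Real.exp x)) ^ k := by
  rw [Real.exp_nat_mul, ENNReal.ofReal_pow (Real.exp_nonneg _)]

/-- Upper bound: above the scale entropy, the Pesin–Pitskel content vanishes. -/
lemma ppMlim_zero_of_lt [Nonempty X] {ε t : ℝ} (hε : 0 < ε) (ht0 : 0 < t)
    (ht : hsc T (ε/2) < t) (Z : Set X) :
    ppMlim T (fun _ => (0 : ℝ)) Z t ε = 0 := by
  classical
  rw [ppMlim, ENNReal.iSup_eq_zero]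
  intro n₀
  refine le_antisymm ?_ zero_le
  refine ENNReal.le_of_forall_pos_le_add fun δ hδ _ => ?_
  rw [zero_add]
  have hδ2 : (0 : ℝ≥0∞) < (δ : ℝ≥0∞) / 2 := by
    simp only [ENNReal.div_pos_iff]
    exact ⟨by exact_mod_cast hδ.ne', by simp⟩
  set t' := (hsc T (ε/2) + t)/2 with ht'def
  have hε2 : (0:ℝ) < ε/2 := by linarith
  have ht'1 : hsc T (ε/2) < t' := by rw [ht'def]; linarith
  have ht'2 : t' < t := by rw [ht'def]; linarith [hsc_nonneg T hε2]
  have hev : ∀ᶠ n in atTop, Real.log (sepSum T (fun _ => (0:ℝ)) n (ε/2)) / n < t' :=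
    eventually_lt_of_limsup_lt ht'1 (seq_isBounded T hε2)
  obtain ⟨N₁, hN₁⟩ := eventually_atTop.1 hev
  set a := ENNReal.ofReal (Real.exp (t' - t)) with hadef
  set b := ENNReal.ofReal (Real.exp (-t)) with hbdef
  have ha1 : a < 1 := by
    rw [hadef, ← ENNReal.ofReal_one]
    exact ENNReal.ofReal_lt_ofReal_iff_of_nonneg (Real.exp_nonneg _) |>.2
      (by rw [show (1:ℝ) = Real.exp 0 by simp]; exact Real.exp_lt_exp.2 (by linarith))
  have hb1 : b < 1 := by
    rw [hbdef, ← ENNReal.ofReal_one]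
    exact ENNReal.ofReal_lt_ofReal_iff_of_nonneg (Real.exp_nonneg _) |>.2
      (by rw [show (1:ℝ) = Real.exp 0 by simp]; exact Real.exp_lt_exp.2 (by linarith))
  have hbinv : (1 - b)⁻¹ ≠ ⊤ := by
    rw [Ne, ENNReal.inv_eq_top, tsub_eq_zero_iff_le]
    exact not_le.2 hb1
  have h1 : Tendsto (fun N : ℕ => a ^ N) atTop (𝓝 0) :=
    ENNReal.tendsto_pow_atTop_nhds_zero_of_lt_one ha1
  have h2 : Tendsto (fun N : ℕ => b ^ N * (1 - b)⁻¹) atTop (𝓝 0) := by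
    have := ENNReal.Tendsto.mul_const (ENNReal.tendsto_pow_atTop_nhds_zero_of_lt_one hb1)
      (Or.inr hbinv)
    simpa using this
  have hev1 := h1.eventually_lt_const hδ2
  have hev2 := h2.eventually_lt_const hδ2
  obtain ⟨N, hN1, hNa, hNb⟩ : ∃ N : ℕ, (N₁ ≤ N ∧ n₀ ≤ N ∧ 1 ≤ N) ∧
      a ^ N < (δ : ℝ≥0∞)/2 ∧ b ^ N * (1 - b)⁻¹ < (δ : ℝ≥0∞)/2 := by
    obtain ⟨N₂, hN₂⟩ := eventually_atTop.1 (hev1.and hev2)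
    refine ⟨max N₂ (max N₁ (max n₀ 1)), ⟨?_, ?_, ?_⟩, (hN₂ _ (le_max_left _ _)).1,
      (hN₂ _ (le_max_left _ _)).2⟩ <;> omega
  obtain ⟨hNN₁, hNn₀, hN1'⟩ := hN1
  obtain ⟨E, hEsep, hEcard, hEcover⟩ := exists_spanning T hε N
  set x₀ : X := Classical.arbitrary X
  set l := E.toList with hldef
  have hlen : l.length = E.card := Finset.length_toList E
  set c : ℕ → ℕ × X := fun i => if i < E.card then (N, l.getD i x₀) else (N + i + 1, x₀)
    with hcdef
  have hc1 : ∀ i, n₀ ≤ (c i).1 := by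
    intro i
    rw [hcdef]
    by_cases h : i < E.card <;> simp [h] <;> omega
  have hc2 : Z ⊆ ⋃ i, bowenBall T (c i).1 (c i).2 ε := by
    intro y _
    obtain ⟨x, hxE, hyx⟩ := Set.mem_iUnion₂.1 (hEcover (Set.mem_univ y))
    obtain ⟨⟨i, hil⟩, hig⟩ := List.mem_iff_get.1 (Finset.mem_toList.2 hxE)
    refine Set.mem_iUnion.2 ⟨i, ?_⟩
    have hic : i < E.card := hlen ▸ hil
    have hgd : l.getD i x₀ = x := by
      rw [List.getD_eq_getElem l x₀ hil, ← hig]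
      simp [List.get_eq_getElem, hldef]
    have hci : c i = (N, x) := by
      rw [hcdef]
      simp only [hic, if_pos, hgd]
    rw [hci]
    exact hyx
  refine le_trans (iInf_le_of_le c (iInf_le_of_le hc1 (iInf_le_of_le hc2 le_rfl))) ?_
  -- bound the sum
  have hcardR : (E.card : ℝ) ≤ Real.exp (t' * N) := by
    have hc := hN₁ N hNN₁
    rw [sepSum_eq_maxcard T hε2, ← hEcard] at hc
    have hcard1 : (1:ℝ) ≤ (E.card : ℝ) := by
      rw [hEcard]; exact_mod_cast one_le_maxcard T hε2
    have hlog : Real.log (E.card) < t' * N := by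
      rw [div_lt_iff₀ (by exact_mod_cast hN1' : (0:ℝ) < (N:ℝ))] at hc
      linarith
    calc (E.card : ℝ) = Real.exp (Real.log (E.card)) :=
          (Real.exp_log (by linarith)).symm
      _ ≤ Real.exp (t' * N) := Real.exp_le_exp.2 hlog.le
  set g1 : ℕ → ℝ≥0∞ := fun i => if i < E.card then ENNReal.ofReal (Real.exp (-t * N)) else 0
  set g2 : ℕ → ℝ≥0∞ := fun i => b ^ (N + i + 1)
  have hterm : ∀ i : ℕ, ENNReal.ofReal (Real.exp (-t * (c i).1 +
      sSup ((birkhoff T (fun _ => (0:ℝ)) (c i).1) '' bowenBall T (c i).1 (c i).2 ε)))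
      ≤ g1 i + g2 i := by
    intro i
    rw [ppM_term_eq]
    by_cases h : i < E.card
    · have : (c i).1 = N := by rw [hcdef]; simp [h]
      rw [this]
      refine le_trans ?_ (le_self_add)
      simp only [g1, h, if_pos, le_refl]
    · have : (c i).1 = N + i + 1 := by rw [hcdef]; simp [h]
      rw [this]
      refine le_trans ?_ (le_add_self)
      have heq : ENNReal.ofReal (Real.exp (-t * ((N + i + 1 : ℕ) : ℝ))) = b ^ (N + i + 1) := by
        rw [show -t * ((N + i + 1 : ℕ) : ℝ) = ((N + i + 1 : ℕ) : ℝ) * (-t) by ring,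
          ofReal_exp_pow, hbdef]
      simp only [g2]
      exact le_of_eq heq
  refine le_trans (ENNReal.tsum_le_tsum hterm) ?_
  rw [ENNReal.tsum_add]
  have hg1 : ∑' i, g1 i ≤ a ^ N := by
    have : ∑' i, g1 i = ∑ i ∈ Finset.range E.card, ENNReal.ofReal (Real.exp (-t * N)) := by
      rw [tsum_eq_sum (s := Finset.range E.card) (fun i hi => by
        simp only [Finset.mem_range] at hi
        simp [g1, hi])]
      refine Finset.sum_congr rfl fun i hi => ?_
      simp only [Finset.mem_range] at hi
      simp [g1, hi]
    rw [this, Finset.sum_const, Finset.card_range, nsmul_eq_mul]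
    calc (E.card : ℝ≥0∞) * ENNReal.ofReal (Real.exp (-t * N))
        ≤ ENNReal.ofReal (Real.exp (t' * N)) * ENNReal.ofReal (Real.exp (-t * N)) := by
          refine mul_le_mul_left ?_ _
          rw [show ((E.card : ℕ) : ℝ≥0∞) = ENNReal.ofReal ((E.card : ℕ) : ℝ) by
            rw [ENNReal.ofReal_natCast]]
          exact ENNReal.ofReal_le_ofReal hcardR
      _ = a ^ N := by
          rw [← ENNReal.ofReal_mul (Real.exp_nonneg _), ← Real.exp_add,
            show t' * (N:ℝ) + -t * (N:ℝ) = ((N:ℕ):ℝ) * (t' - t) by push_cast; ring,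
            ofReal_exp_pow, hadef]
  have hg2 : ∑' i, g2 i ≤ b ^ N * (1 - b)⁻¹ := by
    have : ∑' i, g2 i = b ^ (N + 1) * (1 - b)⁻¹ := by
      simp only [g2]
      calc ∑' i, b ^ (N + i + 1) = ∑' i, b ^ (N + 1) * b ^ i := by
            congr 1; funext i; rw [← pow_add]; congr 1; omega
        _ = b ^ (N + 1) * (1 - b)⁻¹ := by rw [ENNReal.tsum_mul_left, ENNReal.tsum_geometric]
    rw [this]
    exact mul_le_mul_left (pow_le_pow_of_le_one zero_le hb1.le (by omega)) _
  calc ∑' i, g1 i + ∑' i, g2 i ≤ a ^ N + b ^ N * (1 - b)⁻¹ := add_le_add hg1 hg2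
    _ ≤ (δ : ℝ≥0∞)/2 + (δ : ℝ≥0∞)/2 := add_le_add hNa.le hNb.le
    _ = (δ : ℝ≥0∞) := ENNReal.add_halves _

end Stmt7
namespace Stmt7
open Filter Set Metric Topology
open scoped ENNReal

set_option linter.unusedSectionVars false

variable {X : Type*} [MetricSpace X] [CompactSpace X] (T : X → X)

lemma zeroset_subset_pos (Z : Set X) (ε : ℝ) :
    {t : ℝ | ppMlim T (fun _ => (0:ℝ)) Z t ε = 0} ⊆ Set.Ioi 0 := by
  intro t ht
  simp only [Set.mem_setOf_eq] at ht
  by_contra h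
  simp only [Set.mem_Ioi, not_lt] at h
  rw [ppMlim_eq_top_of_nonpos T h Z ε] at ht
  exact ENNReal.top_ne_zero ht

lemma zeroset_nonempty [Nonempty X] {ε : ℝ} (hε : 0 < ε) (Z : Set X) :
    {t : ℝ | ppMlim T (fun _ => (0:ℝ)) Z t ε = 0}.Nonempty := by
  refine ⟨hsc T (ε/2) + 1, ?_⟩
  have h0 := hsc_nonneg T (show (0:ℝ) < ε/2 by linarith)
  exact ppMlim_zero_of_lt T hε (by linarith) (by linarith) Z

lemma ppPressureAt_nonneg [Nonempty X] {ε : ℝ} (hε : 0 < ε) (Z : Set X) :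
    0 ≤ ppPressureAt T (fun _ => (0:ℝ)) Z ε := by
  rw [ppPressureAt]
  refine le_csInf (zeroset_nonempty T hε Z) fun t ht => ?_
  exact le_of_lt (zeroset_subset_pos T Z ε ht)

lemma zeroset_bddBelow (Z : Set X) (ε : ℝ) :
    BddBelow {t : ℝ | ppMlim T (fun _ => (0:ℝ)) Z t ε = 0} :=
  ⟨0, fun t ht => le_of_lt (zeroset_subset_pos T Z ε ht)⟩

lemma ppPressureAt_le_hsc [Nonempty X] {ε : ℝ} (hε : 0 < ε) (Z : Set X) :
    ppPressureAt T (fun _ => (0:ℝ)) Z ε ≤ hsc T (ε/2) := by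
  have h0 := hsc_nonneg T (show (0:ℝ) < ε/2 by linarith)
  have key : ∀ γ : ℝ, 0 < γ → ppPressureAt T (fun _ => (0:ℝ)) Z ε ≤ hsc T (ε/2) + γ := by
    intro γ hγ
    refine csInf_le (zeroset_bddBelow T Z ε) ?_
    exact ppMlim_zero_of_lt T hε (by linarith) (by linarith) Z
  by_contra h
  push_neg at h
  have := key ((ppPressureAt T (fun _ => (0:ℝ)) Z ε - hsc T (ε/2))/2) (by linarith)
  linarith

lemma bowenBall_isOpen (hT : Continuous T) (k : ℕ) (x : X) (ε : ℝ) :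
    IsOpen (bowenBall T k x ε) := by
  have : bowenBall T k x ε = ⋂ i : Fin k, {y | dist (T^[(i:ℕ)] x) (T^[(i:ℕ)] y) < ε} := by
    ext y
    simp only [bowenBall, Set.mem_setOf_eq, Set.mem_iInter]
    exact ⟨fun h i => h i i.isLt, fun h i hi => h ⟨i, hi⟩⟩
  rw [this]
  refine isOpen_iInter_of_finite fun i => ?_
  have hc : Continuous fun y => dist (T^[(i:ℕ)] x) (T^[(i:ℕ)] y) :=
    continuous_const.dist (hT.iterate _)
  exact isOpen_lt hc continuous_const

end Stmt7
namespace Stmt7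
open Filter Set Metric Topology
open scoped ENNReal

set_option linter.unusedSectionVars false

variable {X : Type*} [MetricSpace X] [CompactSpace X] (T : X → X)

/-- The set of points shadowing the word `W` in `k` blocks of length `L = n+1+2m`,
visiting the `ε`-ball of `w` at the end of each block. -/
def blockC (ε : ℝ) (n m L : ℕ) (w : X) (k : ℕ) (W : Fin k → X) : Set X :=
  {x | ∀ j : Fin k, (∀ p ≤ n, dist (T^[(j:ℕ) * L + p] x) (T^[p] (W j)) ≤ ε) ∧
      dist (T^[(j:ℕ) * L + (n + m)] x) w ≤ ε}

lemma blockC_isClosed (hT : Continuous T) (ε : ℝ) (n m L : ℕ) (w : X) (k : ℕ)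
    (W : Fin k → X) : IsClosed (blockC T ε n m L w k W) := by
  have : blockC T ε n m L w k W =
      ⋂ j : Fin k, ((⋂ p : ℕ, ⋂ _ : p ≤ n, {x | dist (T^[(j:ℕ) * L + p] x) (T^[p] (W j)) ≤ ε})
        ∩ {x | dist (T^[(j:ℕ) * L + (n + m)] x) w ≤ ε}) := by
    ext x
    simp only [blockC, Set.mem_setOf_eq, Set.mem_iInter, Set.mem_inter_iff]
  rw [this]
  refine isClosed_iInter fun j => IsClosed.inter ?_ ?_
  · refine isClosed_iInter fun p => isClosed_iInter fun _ => ?_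
    exact isClosed_le ((hT.iterate _).dist continuous_const) continuous_const
  · exact isClosed_le ((hT.iterate _).dist continuous_const) continuous_const

lemma blockC_mono (ε : ℝ) (n m L : ℕ) (w : X) {k k' : ℕ} (h : k ≤ k') (W : Fin k' → X) :
    blockC T ε n m L w k' W ⊆ blockC T ε n m L w k (W ∘ Fin.castLE h) := by
  intro x hx j
  exact hx (Fin.castLE h j)

/-- Specification supplies a point in each `blockC` set. -/
lemma blockC_nonempty [Nonempty X] {ε : ℝ} (hε : 0 < ε) {m : ℕ}
    (hm : ∀ (k : ℕ) (a b : Fin k → ℕ) (xs : Fin k → X),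
      (∀ j, a j ≤ b j) →
      (∀ (j : ℕ) (h : j + 1 < k), b ⟨j, Nat.lt_of_succ_lt h⟩ + m ≤ a ⟨j + 1, h⟩) →
      ∃ x : X, ∀ j : Fin k, ∀ p ≤ b j - a j, dist (T^[p + a j] x) (T^[p] (xs j)) < ε)
    (n : ℕ) {L : ℕ} (hL : L = n + 1 + 2 * m) (w : X) (k : ℕ) (W : Fin k → X) :
    (blockC T ε n m L w k W).Nonempty := by
  classical
  set a : Fin (2 * k) → ℕ :=
    fun j => ((j : ℕ) / 2) * L + (if (j : ℕ) % 2 = 1 then n + m else 0) with hadef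
  set b : Fin (2 * k) → ℕ :=
    fun j => ((j : ℕ) / 2) * L + (if (j : ℕ) % 2 = 1 then n + m else n) with hbdef
  set xs : Fin (2 * k) → X :=
    fun j => if h : (j : ℕ) % 2 = 1 then w else W ⟨(j : ℕ) / 2, by omega⟩ with hxsdef
  have hab : ∀ j, a j ≤ b j := by
    intro j
    simp only [hadef, hbdef]
    by_cases h : (j : ℕ) % 2 = 1
    · rw [if_pos h, if_pos h]
    · rw [if_neg h, if_neg h]
      exact Nat.add_le_add_left (Nat.zero_le n) _
  have hgap : ∀ (j : ℕ) (h : j + 1 < 2 * k),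
      b ⟨j, Nat.lt_of_succ_lt h⟩ + m ≤ a ⟨j + 1, h⟩ := by
    intro j h
    simp only [hadef, hbdef, Fin.val_mk]
    rcases Nat.even_or_odd j with ⟨q, hq⟩ | ⟨q, hq⟩
    · subst hq
      rw [if_neg (by omega : ¬ (q + q) % 2 = 1), if_pos (by omega : (q + q + 1) % 2 = 1),
        (by omega : (q + q) / 2 = q), (by omega : (q + q + 1) / 2 = q)]
      omega
    · subst hq
      rw [if_pos (by omega : (2 * q + 1) % 2 = 1),
        if_neg (by omega : ¬ (2 * q + 1 + 1) % 2 = 1),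
        (by omega : (2 * q + 1) / 2 = q), (by omega : (2 * q + 1 + 1) / 2 = q + 1)]
      calc q * L + (n + m) + m = q * L + (n + 2 * m) := by ring
        _ ≤ q * L + L := by
            refine Nat.add_le_add_left ?_ _
            omega
        _ = (q + 1) * L + 0 := by ring
  obtain ⟨x, hx⟩ := hm (2 * k) a b xs hab hgap
  refine ⟨x, fun j => ⟨fun p hp => ?_, ?_⟩⟩
  · -- shadowing from the even segment
    have hjlt : 2 * (j : ℕ) < 2 * k := by omega
    have hmod : ¬ ((⟨2 * (j : ℕ), hjlt⟩ : Fin (2 * k)) : ℕ) % 2 = 1 := by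
      simp only [Fin.val_mk]; omega
    have hdiv : ((⟨2 * (j : ℕ), hjlt⟩ : Fin (2 * k)) : ℕ) / 2 = (j : ℕ) := by
      simp only [Fin.val_mk]; omega
    have haj : a ⟨2 * (j : ℕ), hjlt⟩ = (j : ℕ) * L := by
      simp only [hadef, if_neg hmod, hdiv, add_zero]
    have hbj : b ⟨2 * (j : ℕ), hjlt⟩ = (j : ℕ) * L + n := by
      simp only [hbdef, if_neg hmod, hdiv]
    have hxsj : xs ⟨2 * (j : ℕ), hjlt⟩ = W j := by
      simp only [hxsdef, dif_neg hmod]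
      congr 1
      exact Fin.ext (by simp only [Fin.val_mk, hdiv])
    have key := hx ⟨2 * (j : ℕ), hjlt⟩ p (by rw [haj, hbj]; omega)
    rw [haj, hxsj] at key
    rw [show (j : ℕ) * L + p = p + (j : ℕ) * L by ring]
    exact key.le
  · -- visit from the odd segment
    have hjlt : 2 * (j : ℕ) + 1 < 2 * k := by omega
    have hmod : ((⟨2 * (j : ℕ) + 1, hjlt⟩ : Fin (2 * k)) : ℕ) % 2 = 1 := by
      simp only [Fin.val_mk]; omega
    have hdiv : ((⟨2 * (j : ℕ) + 1, hjlt⟩ : Fin (2 * k)) : ℕ) / 2 = (j : ℕ) := by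
      simp only [Fin.val_mk]; omega
    have haj : a ⟨2 * (j : ℕ) + 1, hjlt⟩ = (j : ℕ) * L + (n + m) := by
      simp only [hadef, if_pos hmod, hdiv]
    have hxsj : xs ⟨2 * (j : ℕ) + 1, hjlt⟩ = w := by
      simp only [hxsdef, dif_pos hmod]
    have key := hx ⟨2 * (j : ℕ) + 1, hjlt⟩ 0 (Nat.zero_le _)
    rw [haj, hxsj] at key
    simpa using key.le

/-- Distinct separated words give disjoint `blockC` sets even inside a common Bowen ball. -/
lemma blockC_ball_eq {ε : ℝ} (hε : 0 < ε) {n m L : ℕ} {w : X} {Γ : Finset X}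
    (hΓ : IsSep T (n + 1) (5 * ε) ↑Γ) {k : ℕ} {W W' : Fin k → X}
    (hW : ∀ j, W j ∈ Γ) (hW' : ∀ j, W' j ∈ Γ)
    {x x' : X} (hx : x ∈ blockC T ε n m L w k W) (hx' : x' ∈ blockC T ε n m L w k W')
    {M : ℕ} {c : X} (hxb : x ∈ bowenBall T M c ε) (hx'b : x' ∈ bowenBall T M c ε)
    (hM : ∀ j : Fin k, (j : ℕ) * L + n < M) :
    W = W' := by
  funext j
  by_contra hne
  obtain ⟨p, hp, hd⟩ := hΓ (W j) (hW j) (W' j) (hW' j) hne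
  have hpn : p ≤ n := by omega
  have h1 := (hx j).1 p hpn
  have h2 := (hx' j).1 p hpn
  have ht : (j : ℕ) * L + p < M := lt_of_le_of_lt (by omega) (hM j)
  have h3 := hxb _ ht
  have h4 := hx'b _ ht
  have htri : dist (T^[p] (W j)) (T^[p] (W' j)) ≤
      dist (T^[p] (W j)) (T^[(j:ℕ) * L + p] x) +
      dist (T^[(j:ℕ) * L + p] x) (T^[(j:ℕ) * L + p] x') +
      dist (T^[(j:ℕ) * L + p] x') (T^[p] (W' j)) := dist_triangle4 _ _ _ _
  have h5 : dist (T^[(j:ℕ) * L + p] x) (T^[(j:ℕ) * L + p] x') ≤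
      dist (T^[(j:ℕ) * L + p] c) (T^[(j:ℕ) * L + p] x) +
      dist (T^[(j:ℕ) * L + p] c) (T^[(j:ℕ) * L + p] x') := dist_triangle_left _ _ _
  rw [dist_comm (T^[p] (W j)) (T^[(j:ℕ) * L + p] x)] at htri
  linarith

/-- Two points of `blockC` sets (same word length) with a common Bowen ball: words agree.
(no-ball version for uniqueness inside `bigF`) -/
lemma blockC_unique {ε : ℝ} (hε : 0 < ε) {n m L : ℕ} {w : X} {Γ : Finset X}
    (hΓ : IsSep T (n + 1) (5 * ε) ↑Γ) {k : ℕ} {W W' : Fin k → X}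
    (hW : ∀ j, W j ∈ Γ) (hW' : ∀ j, W' j ∈ Γ)
    {x : X} (hx : x ∈ blockC T ε n m L w k W) (hx' : x ∈ blockC T ε n m L w k W') :
    W = W' := by
  funext j
  by_contra hne
  obtain ⟨p, hp, hd⟩ := hΓ (W j) (hW j) (W' j) (hW' j) hne
  have hpn : p ≤ n := by omega
  have h1 := (hx j).1 p hpn
  have h2 := (hx' j).1 p hpn
  have htri : dist (T^[p] (W j)) (T^[p] (W' j)) ≤
      dist (T^[p] (W j)) (T^[(j:ℕ) * L + p] x) +
      dist (T^[(j:ℕ) * L + p] x) (T^[p] (W' j)) := dist_triangle _ _ _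
  rw [dist_comm (T^[p] (W j)) (T^[(j:ℕ) * L + p] x)] at htri
  linarith

end Stmt7
namespace Stmt7
open Filter Set Metric Topology
open scoped ENNReal

set_option linter.unusedSectionVars false

variable {X : Type*} [MetricSpace X] [CompactSpace X] (T : X → X)

/-- The Moran-like fractal: points shadowing some infinite word over `Γ`. -/
def bigF (ε : ℝ) (n m L : ℕ) (w : X) (Γ : Finset X) : Set X :=
  ⋂ k : ℕ, ⋃ W : Fin k → {y // y ∈ Γ}, blockC T ε n m L w k (fun j => (W j : X))

lemma bigF_isClosed (hT : Continuous T) (ε : ℝ) (n m L : ℕ) (w : X) (Γ : Finset X) :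
    IsClosed (bigF T ε n m L w Γ) := by
  refine isClosed_iInter fun k => isClosed_iUnion_of_finite fun W =>
    blockC_isClosed T hT ε n m L w k _

/-- Points of `bigF` visit the `ε`-ball of `w` at the end of every block. -/
lemma bigF_visits {ε : ℝ} {n m L : ℕ} {w : X} {Γ : Finset X} {x : X}
    (hx : x ∈ bigF T ε n m L w Γ) (j : ℕ) :
    dist (T^[j * L + (n + m)] x) w ≤ ε := by
  have := Set.mem_iInter.1 hx (j + 1)
  obtain ⟨W, hW⟩ := Set.mem_iUnion.1 this
  exact (hW (⟨j, by omega⟩ : Fin (j + 1))).2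

/-- `bigF` is contained in the non-dense orbit set. -/
lemma bigF_subset_Eset (hT : Continuous T) {ε η : ℝ} (hεη : ε < η)
    {n m L : ℕ} (hL : 1 ≤ L) {w z₀ : X} (hw : ∀ s : ℕ, η ≤ dist (T^[s] z₀) w)
    (Γ : Finset X) : bigF T ε n m L w Γ ⊆ Eset T z₀ := by
  intro x hx
  set L0 := L + n + m with hL0
  set G : Set X := ⋃ s : Fin (L0 + 1), {u | dist (T^[(s : ℕ)] u) w ≤ ε} with hGdef
  have hGclosed : IsClosed G :=
    isClosed_iUnion_of_finite fun s =>
      isClosed_le ((hT.iterate _).dist continuous_const) continuous_const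
  have horb : Set.range (fun s : ℕ => T^[s] x) ⊆ G := by
    rintro - ⟨i, rfl⟩
    have h0L : 0 < L := by omega
    obtain ⟨jj, hv1, hv2⟩ : ∃ jj : ℕ, i ≤ jj * L ∧ jj * L ≤ i + L := by
      refine ⟨i / L + 1, ?_, ?_⟩
      · calc i = L * (i / L) + i % L := (Nat.div_add_mod i L).symm
          _ ≤ L * (i / L) + L := Nat.add_le_add_left (Nat.mod_lt i h0L).le _
          _ = (i / L + 1) * L := by ring
      · calc (i / L + 1) * L = i / L * L + L := by ring
          _ ≤ i + L := Nat.add_le_add_right (Nat.div_mul_le_self i L) _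
    have h5 : jj * L + (n + m) ≤ L0 + i := by
      calc jj * L + (n + m) ≤ (i + L) + (n + m) := Nat.add_le_add_right hv2 _
        _ = L0 + i := by rw [hL0]; ring
    have h6 : jj * L + (n + m) - i ≤ L0 := by
      rw [Nat.sub_le_iff_le_add]
      first
      | exact h5
      | exact h5.trans (Nat.le_of_eq (Nat.add_comm _ _))
    have h7 : i ≤ jj * L + (n + m) := le_trans hv1 (Nat.le_add_right _ _)
    refine Set.mem_iUnion.2 ⟨⟨jj * L + (n + m) - i, Nat.lt_succ_of_le h6⟩, ?_⟩
    simp only [Set.mem_setOf_eq, Fin.val_mk]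
    rw [← Function.iterate_add_apply, Nat.sub_add_cancel h7]
    exact bigF_visits T hx jj
  have hcl : closure (Set.range fun s : ℕ => T^[s] x) ⊆ G :=
    hGclosed.closure_subset_iff.2 horb
  intro hz₀
  obtain ⟨s, hs⟩ := Set.mem_iUnion.1 (hcl hz₀)
  simp only [Set.mem_setOf_eq] at hs
  exact absurd (lt_of_le_of_lt hs hεη) (not_lt.2 (hw s))

/-- Every finite word extends to a point of `bigF`. -/
lemma exists_point_bigF [Nonempty X] {ε : ℝ} (hε : 0 < ε) (hT : Continuous T) {m : ℕ}
    (hm : ∀ (k : ℕ) (a b : Fin k → ℕ) (xs : Fin k → X),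
      (∀ j, a j ≤ b j) →
      (∀ (j : ℕ) (h : j + 1 < k), b ⟨j, Nat.lt_of_succ_lt h⟩ + m ≤ a ⟨j + 1, h⟩) →
      ∃ x : X, ∀ j : Fin k, ∀ p ≤ b j - a j, dist (T^[p + a j] x) (T^[p] (xs j)) < ε)
    (n : ℕ) {L : ℕ} (hL : L = n + 1 + 2 * m) (w : X) {Γ : Finset X} (hΓ : Γ.Nonempty)
    (k : ℕ) (W : Fin k → {y // y ∈ Γ}) :
    ∃ x, x ∈ bigF T ε n m L w Γ ∧ x ∈ blockC T ε n m L w k (fun j => (W j : X)) := by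
  classical
  obtain ⟨y₀, hy₀⟩ := hΓ
  set ωs : ℕ → {y // y ∈ Γ} := fun j => if h : j < k then W ⟨j, h⟩ else ⟨y₀, hy₀⟩ with hωs
  set V : ℕ → Set X := fun q => blockC T ε n m L w (k + q) (fun j => (ωs (j : ℕ) : X))
    with hVdef
  have hVsub : ∀ q, V (q + 1) ⊆ V q := by
    intro q
    have h1 : k + q ≤ k + q + 1 := by omega
    have := blockC_mono T ε n m L w h1 (fun j : Fin (k + q + 1) => (ωs (j : ℕ) : X))
    convert this using 2
    all_goals rfl
  have hVne : ∀ q, (V q).Nonempty := fun q =>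
    blockC_nonempty T hε hm n hL w (k + q) _
  have hVclosed : ∀ q, IsClosed (V q) := fun q => blockC_isClosed T hT ε n m L w _ _
  have hVcompact : IsCompact (V 0) := (hVclosed 0).isCompact
  obtain ⟨x, hx⟩ := IsCompact.nonempty_iInter_of_sequence_nonempty_isCompact_isClosed
    V hVsub hVne hVcompact hVclosed
  have hxq : ∀ q : ℕ, x ∈ V q := fun q => Set.mem_iInter.1 hx q
  refine ⟨x, ?_, ?_⟩
  · refine Set.mem_iInter.2 fun l => ?_
    refine Set.mem_iUnion.2 ⟨fun j : Fin l => ωs (j : ℕ), ?_⟩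
    have h1 : l ≤ k + l := by omega
    have h2 := blockC_mono T ε n m L w h1 (fun j : Fin (k + l) => (ωs (j : ℕ) : X)) (hxq l)
    convert h2 using 2
    rfl
  · have h0 := hxq 0
    have heq : (fun j : Fin (k + 0) => (ωs (j : ℕ) : X)) = fun j : Fin k => (W j : X) := by
      funext j
      have hj : (j : ℕ) < k := j.isLt
      simp only [hωs, dif_pos hj]
      exact congrArg _ (congrArg W (Fin.ext rfl))
    rw [hVdef] at h0
    simp only at h0
    rwa [heq] at h0

end Stmt7
namespace Stmt7
open Filter Set Metric Topology
open scoped ENNReal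

set_option linter.unusedSectionVars false
set_option maxHeartbeats 1000000

variable {X : Type*} [MetricSpace X] [CompactSpace X] (T : X → X)

/-- Key counting estimate: any admissible cover of `E(z₀)` has mass at least 1. -/
lemma ppM_ge_one [Nonempty X] (hT : Continuous T) {ε η : ℝ} (hε : 0 < ε) (hεη : ε < η)
    {m : ℕ}
    (hm : ∀ (k : ℕ) (a b : Fin k → ℕ) (xs : Fin k → X),
      (∀ j, a j ≤ b j) →
      (∀ (j : ℕ) (h : j + 1 < k), b ⟨j, Nat.lt_of_succ_lt h⟩ + m ≤ a ⟨j + 1, h⟩) →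
      ∃ x : X, ∀ j : Fin k, ∀ p ≤ b j - a j, dist (T^[p + a j] x) (T^[p] (xs j)) < ε)
    {z₀ w : X} (hw : ∀ s : ℕ, η ≤ dist (T^[s] z₀) w)
    (n : ℕ) {Γ : Finset X} (hΓsep : IsSep T (n + 1) (5 * ε) ↑Γ) (hΓne : Γ.Nonempty)
    {t : ℝ} (ht0 : 0 < t)
    (ht : t * (((n:ℝ) + 1) * ((n : ℝ) + 1 + 2 * m)) ≤ (n : ℝ) * Real.log (Γ.card)) :
    1 ≤ ppM T (fun _ => (0 : ℝ)) (Eset T z₀) t ((n + 1) * (n + 1)) ε := by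
  classical
  set L : ℕ := n + 1 + 2 * m with hLdef
  set S : ℕ := Γ.card with hSdef
  have hS1 : 1 ≤ S := Finset.card_pos.2 hΓne
  have hSpos : (0:ℝ) < (S:ℝ) := by exact_mod_cast hS1
  have hlogS : 0 ≤ Real.log S := Real.log_nonneg (by exact_mod_cast hS1)
  rw [ppM, le_iInf_iff]
  intro c
  rw [le_iInf_iff]; intro hc1
  rw [le_iInf_iff]; intro hc2
  set F := bigF T ε n m L w Γ with hFdef
  have hFE : F ⊆ Eset T z₀ := bigF_subset_Eset T hT hεη (by omega) hw Γ
  have hFcover : F ⊆ ⋃ i, bowenBall T (c i).1 (c i).2 ε := hFE.trans hc2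
  have hFcompact : IsCompact F := (bigF_isClosed T hT ε n m L w Γ).isCompact
  obtain ⟨I, hI⟩ := hFcompact.elim_finite_subcover _
    (fun i => bowenBall_isOpen T hT _ _ _) hFcover
  set kfun : ℕ → ℕ := fun i => ((c i).1 - (n + 1)) / L + 1 with hkdef
  set K := I.sup kfun with hKdef
  -- choose a point of F for each word of length K
  have hpoint : ∀ W : Fin K → {y // y ∈ Γ},
      ∃ x, x ∈ F ∧ x ∈ blockC T ε n m L w K (fun j => (W j : X)) :=
    fun W => exists_point_bigF T hε hT hm n hLdef w hΓne K W
  choose pt hptF hptC using hpoint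
  have hidx : ∀ W : Fin K → {y // y ∈ Γ},
      ∃ i, i ∈ I ∧ pt W ∈ bowenBall T (c i).1 (c i).2 ε := by
    intro W
    obtain ⟨U, hU⟩ := Set.mem_iUnion.1 (hI (hptF W))
    simp only [Set.mem_iUnion] at hU
    obtain ⟨hUI, hUb⟩ := hU
    exact ⟨U, hUI, hUb⟩
  choose idx hidxI hidxB using hidx
  -- capacity of each ball: words agree on the first `kfun i` blocks
  have hMlt : ∀ i ∈ I, ∀ j : Fin (kfun i), (j : ℕ) * L + n < (c i).1 := by
    intro i _ j
    have hci : (n + 1) * (n + 1) ≤ (c i).1 := hc1 i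
    have hciN : n + 1 ≤ (c i).1 :=
      le_trans (Nat.le_mul_of_pos_left _ (by omega)) hci
    have h1 : (j : ℕ) ≤ ((c i).1 - (n + 1)) / L := Nat.lt_succ_iff.1 j.isLt
    have h2 : (j : ℕ) * L ≤ ((c i).1 - (n + 1)) / L * L := Nat.mul_le_mul_right L h1
    have h3 : ((c i).1 - (n + 1)) / L * L ≤ (c i).1 - (n + 1) := Nat.div_mul_le_self _ _
    have h4 : (j : ℕ) * L ≤ (c i).1 - (n + 1) := le_trans h2 h3
    revert h4 hciN
    generalize (j : ℕ) * L = A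
    intro h4 hciN
    omega
  have hprefix : ∀ (W W' : Fin K → {y // y ∈ Γ}) (i : ℕ), i ∈ I → idx W = i → idx W' = i →
      ∀ hk : kfun i ≤ K, ∀ j : Fin (kfun i), W (Fin.castLE hk j) = W' (Fin.castLE hk j) := by
    intro W W' i hiI hW hW' hk j
    have hxW : pt W ∈ blockC T ε n m L w (kfun i)
        ((fun j => (W j : X)) ∘ Fin.castLE hk) := blockC_mono T ε n m L w hk _ (hptC W)
    have hxW' : pt W' ∈ blockC T ε n m L w (kfun i)
        ((fun j => (W' j : X)) ∘ Fin.castLE hk) := blockC_mono T ε n m L w hk _ (hptC W')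
    have hbW : pt W ∈ bowenBall T (c i).1 (c i).2 ε := hW ▸ hidxB W
    have hbW' : pt W' ∈ bowenBall T (c i).1 (c i).2 ε := hW' ▸ hidxB W'
    have heq := blockC_ball_eq T hε hΓsep (fun j => (W (Fin.castLE hk j)).2)
      (fun j => (W' (Fin.castLE hk j)).2) hxW hxW' hbW hbW' (hMlt i hiI)
    have := congrFun heq j
    exact Subtype.ext this
  -- counting
  have hcard : Fintype.card (Fin K → {y // y ∈ Γ}) ≤ ∑ i ∈ I, S ^ (K - kfun i) := by
    rw [← Finset.card_univ,
      Finset.card_eq_sum_card_fiberwise (f := idx) (s := Finset.univ) (t := I)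
        (fun W _ => hidxI W)]
    refine Finset.sum_le_sum fun i hi => ?_
    have hk : kfun i ≤ K := Finset.le_sup hi
    have hinj : Set.InjOn (fun (W : Fin K → {y // y ∈ Γ}) (r : Fin (K - kfun i)) =>
        W ⟨kfun i + (r : ℕ), by omega⟩)
        ↑(Finset.univ.filter (fun W => idx W = i)) := by
      intro W hW W' hW' hg
      simp only [Finset.coe_filter, Set.mem_setOf_eq, Finset.mem_univ, true_and] at hW hW'
      funext j
      rcases lt_or_ge (j : ℕ) (kfun i) with hlt | hge
      · have := hprefix W W' i hi hW hW' hk ⟨(j : ℕ), hlt⟩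
        have hj : Fin.castLE hk ⟨(j : ℕ), hlt⟩ = j := Fin.ext rfl
        rwa [hj] at this
      · have hr : (j : ℕ) - kfun i < K - kfun i := by omega
        have := congrFun hg ⟨(j : ℕ) - kfun i, hr⟩
        simp only at this
        have hj : (⟨kfun i + ((j : ℕ) - kfun i), by omega⟩ : Fin K) = j :=
          Fin.ext (by simp only [Fin.val_mk]; omega)
        rwa [hj] at this
    have := Finset.card_le_card_of_injOn _ (fun a _ => Finset.mem_univ _) hinj
    calc (Finset.univ.filter (fun W => idx W = i)).card
        ≤ (Finset.univ : Finset (Fin (K - kfun i) → {y // y ∈ Γ})).card := this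
      _ = S ^ (K - kfun i) := by
          rw [Finset.card_univ, Fintype.card_fun, Fintype.card_coe, Fintype.card_fin]
  have hSK : (S : ℝ) ^ K ≤ ∑ i ∈ I, (S : ℝ) ^ (K - kfun i) := by
    have h1 : S ^ K ≤ ∑ i ∈ I, S ^ (K - kfun i) := by
      calc S ^ K = Fintype.card (Fin K → {y // y ∈ Γ}) := by
            rw [Fintype.card_fun, Fintype.card_coe, Fintype.card_fin]
        _ ≤ _ := hcard
    exact_mod_cast h1
  -- the real inequality
  have hmain : (1 : ℝ) ≤ ∑ i ∈ I, Real.exp (-t * ((c i).1 : ℝ)) := by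
    have hSKpos : (0:ℝ) < (S:ℝ) ^ K := by positivity
    have h2 : (1:ℝ) ≤ ∑ i ∈ I, (S:ℝ) ^ (K - kfun i) / (S:ℝ) ^ K := by
      rw [← Finset.sum_div, le_div_iff₀ hSKpos, one_mul]
      exact hSK
    refine le_trans h2 (Finset.sum_le_sum fun i hi => ?_)
    have hk : kfun i ≤ K := Finset.le_sup hi
    have hpow : (S:ℝ) ^ (K - kfun i) / (S:ℝ) ^ K = ((S:ℝ) ^ (kfun i))⁻¹ := by
      rw [pow_sub₀ _ (ne_of_gt hSpos) hk, mul_comm, mul_div_assoc, div_self (ne_of_gt hSKpos), mul_one]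
    rw [hpow]
    -- show t * m_i ≤ kfun i * log S
    have hci : (n + 1) * (n + 1) ≤ (c i).1 := hc1 i
    have hkL : (c i).1 - (n + 1) + 1 ≤ kfun i * L := by
      have h1 : ((c i).1 - (n + 1)) / L * L + ((c i).1 - (n + 1)) % L = (c i).1 - (n + 1) := by
        rw [mul_comm]
        exact Nat.div_add_mod _ _
      have h2 : ((c i).1 - (n + 1)) % L < L := Nat.mod_lt _ (by omega)
      have h3 : kfun i * L = ((c i).1 - (n + 1)) / L * L + L := by
        simp only [hkdef]; ring
      rw [h3]
      revert h1 h2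
      generalize ((c i).1 - (n + 1)) / L * L = A
      generalize ((c i).1 - (n + 1)) % L = B
      intro h1 h2
      omega
    have key : t * ((c i).1 : ℝ) ≤ (kfun i : ℝ) * Real.log S := by
      have hciN : n + 1 ≤ (c i).1 :=
        le_trans (Nat.le_mul_of_pos_left _ (by omega)) hci
      have hkLr : ((c i).1 : ℝ) - (n + 1) + 1 ≤ (kfun i : ℝ) * (L : ℝ) := by
        have := hkL
        have hcast : (((c i).1 - (n + 1) + 1 : ℕ) : ℝ) = ((c i).1 : ℝ) - (n + 1) + 1 := by
          push_cast [Nat.cast_sub hciN]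
          ring
        calc ((c i).1 : ℝ) - (n + 1) + 1 = (((c i).1 - (n + 1) + 1 : ℕ) : ℝ) := hcast.symm
          _ ≤ ((kfun i * L : ℕ) : ℝ) := by exact_mod_cast this
          _ = (kfun i : ℝ) * (L : ℝ) := by push_cast; ring
      have hcir : ((n:ℝ) + 1) * ((n:ℝ) + 1) ≤ ((c i).1 : ℝ) := by exact_mod_cast hci
      have hLr : ((n:ℝ) + 1 + 2 * m) = (L : ℝ) := by rw [hLdef]; push_cast; ring
      rw [hLr] at ht
      have hmi0 : (0:ℝ) ≤ ((c i).1 : ℝ) := Nat.cast_nonneg _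
      have hNL : (0:ℝ) < ((n:ℝ) + 1) * (L:ℝ) := by
        have : (0:ℝ) < (L:ℝ) := by
          have : 1 ≤ L := by omega
          exact_mod_cast lt_of_lt_of_le zero_lt_one (by exact_mod_cast this)
        positivity
      -- multiply out
      have e1 : t * (((n:ℝ) + 1) * (L:ℝ)) * ((c i).1 : ℝ) ≤
          ((n:ℝ) * Real.log S) * ((c i).1 : ℝ) :=
        mul_le_mul_of_nonneg_right ht hmi0
      have e2 : ((n:ℝ) + 1) * (((c i).1 : ℝ) - (n + 1) + 1) ≤
          ((n:ℝ) + 1) * ((kfun i : ℝ) * (L : ℝ)) :=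
        mul_le_mul_of_nonneg_left hkLr (by positivity)
      have e3 : (n:ℝ) * ((c i).1 : ℝ) ≤ ((n:ℝ) + 1) * ((kfun i : ℝ) * (L : ℝ)) := by
        nlinarith [hcir]
      have e4 : ((n:ℝ) * Real.log S) * ((c i).1 : ℝ) ≤
          (((n:ℝ) + 1) * ((kfun i : ℝ) * (L : ℝ))) * Real.log S := by
        calc ((n:ℝ) * Real.log S) * ((c i).1 : ℝ) = ((n:ℝ) * ((c i).1 : ℝ)) * Real.log S := by
              ring
          _ ≤ (((n:ℝ) + 1) * ((kfun i : ℝ) * (L : ℝ))) * Real.log S :=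
              mul_le_mul_of_nonneg_right e3 hlogS
      have e5 : t * ((c i).1 : ℝ) * (((n:ℝ) + 1) * (L:ℝ)) ≤
          ((kfun i : ℝ) * Real.log S) * (((n:ℝ) + 1) * (L:ℝ)) := by
        calc t * ((c i).1 : ℝ) * (((n:ℝ) + 1) * (L:ℝ))
            = t * (((n:ℝ) + 1) * (L:ℝ)) * ((c i).1 : ℝ) := by ring
          _ ≤ ((n:ℝ) * Real.log S) * ((c i).1 : ℝ) := e1
          _ ≤ (((n:ℝ) + 1) * ((kfun i : ℝ) * (L : ℝ))) * Real.log S := e4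
          _ = ((kfun i : ℝ) * Real.log S) * (((n:ℝ) + 1) * (L:ℝ)) := by ring
      exact le_of_mul_le_mul_right e5 hNL
    -- conclude
    have hSk : (S:ℝ) ^ kfun i = Real.exp ((kfun i : ℝ) * Real.log S) := by
      rw [Real.exp_nat_mul, Real.exp_log hSpos]
    rw [show -t * ((c i).1:ℝ) = -(t * ((c i).1:ℝ)) by ring, Real.exp_neg, hSk]
    exact inv_anti₀ (Real.exp_pos _) (Real.exp_le_exp.2 key)
  -- transfer to ENNReal
  calc (1 : ℝ≥0∞) = ENNReal.ofReal 1 := by simp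
    _ ≤ ENNReal.ofReal (∑ i ∈ I, Real.exp (-t * ((c i).1 : ℝ))) :=
        ENNReal.ofReal_le_ofReal hmain
    _ = ∑ i ∈ I, ENNReal.ofReal (Real.exp (-t * ((c i).1 : ℝ))) :=
        ENNReal.ofReal_sum_of_nonneg fun i _ => Real.exp_nonneg _
    _ = ∑ i ∈ I, ENNReal.ofReal (Real.exp (-t * ((c i).1 : ℝ) +
        sSup ((birkhoff T (fun _ => (0:ℝ)) (c i).1) '' bowenBall T (c i).1 (c i).2 ε))) := by
        refine Finset.sum_congr rfl fun i _ => ?_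
        rw [ppM_term_eq]
    _ ≤ ∑' i, ENNReal.ofReal (Real.exp (-t * ((c i).1 : ℝ) +
        sSup ((birkhoff T (fun _ => (0:ℝ)) (c i).1) '' bowenBall T (c i).1 (c i).2 ε))) :=
        ENNReal.sum_le_tsum I

end Stmt7
namespace Stmt7
open Filter Set Metric Topology
open scoped ENNReal

set_option linter.unusedSectionVars false
set_option maxHeartbeats 1000000

variable {X : Type*} [MetricSpace X] [CompactSpace X] (T : X → X)

/-- Lower bound: the scale-`5ε` entropy is at most the non-dense-orbit pressure at scale `ε`. -/
lemma hsc_le_ppPressureAt [Nonempty X] (hT : Continuous T) (hspec : Specification T)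
    {z₀ w : X} {η : ℝ} (hw : ∀ s : ℕ, η ≤ dist (T^[s] z₀) w)
    {ε : ℝ} (hε : 0 < ε) (hεη : ε < η) :
    hsc T (5 * ε) ≤ ppPressureAt T (fun _ => (0 : ℝ)) (Eset T z₀) ε := by
  obtain ⟨m, hm⟩ := hspec ε hε
  set p := ppPressureAt T (fun _ => (0:ℝ)) (Eset T z₀) ε with hpdef
  have hp0 : 0 ≤ p := ppPressureAt_nonneg T hε _
  have h5ε : (0:ℝ) < 5 * ε := by linarith
  have hA : ∀ n : ℕ,
      ((n:ℝ) * Real.log (maxcard T (n+1) (5*ε))) / (((n:ℝ)+1) * ((n:ℝ)+1+2*(m:ℝ))) ≤ p := by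
    intro n
    have hNL : (0:ℝ) < ((n:ℝ)+1) * ((n:ℝ)+1+2*(m:ℝ)) := by positivity
    refine le_csInf (zeroset_nonempty T hε _) fun t htz => ?_
    have ht0 : 0 < t := zeroset_subset_pos T _ ε htz
    rw [div_le_iff₀ hNL]
    by_contra hcon
    push_neg at hcon
    have hle : t * (((n:ℝ)+1) * ((n:ℝ)+1+2*(m:ℝ))) ≤
        (n:ℝ) * Real.log (maxcard T (n+1) (5*ε)) := hcon.le
    obtain ⟨Γ, hΓsep, hΓcard⟩ := maxcard_mem T (n := n+1) h5ε
    have hΓne : Γ.Nonempty := Finset.card_pos.1 (by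
      rw [hΓcard]; exact one_le_maxcard T h5ε)
    have hone := ppM_ge_one T hT hε hεη hm hw n hΓsep hΓne ht0 (by
      rw [hΓcard]; exact hle)
    have h2 : (1:ℝ≥0∞) ≤ ppMlim T (fun _ => (0:ℝ)) (Eset T z₀) t ε := by
      refine le_trans hone ?_
      rw [ppMlim]
      exact le_iSup (fun k => ppM T (fun _ => (0:ℝ)) (Eset T z₀) t k ε) ((n+1)*(n+1))
    have htz' : ppMlim T (fun _ => (0:ℝ)) (Eset T z₀) t ε = 0 := htz
    rw [htz'] at h2
    exact absurd h2 (by simp)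
  by_contra hcon
  push_neg at hcon
  set a₂ := (p + hsc T (5*ε))/2 with ha₂def
  have ha₂1 : p < a₂ := by rw [ha₂def]; linarith
  have ha₂2 : a₂ < hsc T (5*ε) := by rw [ha₂def]; linarith
  have ha₂0 : 0 < a₂ := lt_of_le_of_lt hp0 ha₂1
  have hfreq := frequently_lt_of_lt_limsup (seq_isCobounded T h5ε) ha₂2
  obtain ⟨N₁, hN₁⟩ := exists_nat_gt ((a₂ + 2*(m:ℝ)*p + 1)/(a₂ - p))
  obtain ⟨N, hlt, hge⟩ := (hfreq.and_eventually (eventually_ge_atTop (max N₁ 2))).exists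
  obtain ⟨n, rfl⟩ : ∃ n, N = n + 1 := ⟨N - 1, by omega⟩
  rw [sepSum_eq_maxcard T h5ε] at hlt
  set Sr := Real.log (maxcard T (n+1) (5*ε)) with hSrdef
  have hn1 : 1 ≤ n := by
    have := le_trans (le_max_right N₁ 2) hge
    omega
  have hnr : (1:ℝ) ≤ (n:ℝ) := by exact_mod_cast hn1
  have hN₁r : ((N₁:ℕ):ℝ) ≤ (n:ℝ)+1 := by
    have h1 : N₁ ≤ n + 1 := le_trans (le_max_left N₁ 2) hge
    exact_mod_cast h1
  have hap : (0:ℝ) < a₂ - p := by linarith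
  have hfrac : (a₂ + 2*(m:ℝ)*p + 1)/(a₂ - p) < (n:ℝ)+1 := lt_of_lt_of_le hN₁ hN₁r
  have hkey : (a₂ + 2*(m:ℝ)*p + 1) < ((n:ℝ)+1)*(a₂ - p) := by
    rw [div_lt_iff₀ hap] at hfrac
    linarith
  have hposn1 : (0:ℝ) < (n:ℝ)+1 := by linarith
  have hSr : a₂*((n:ℝ)+1) < Sr := by
    have hlt' : a₂ < Sr / ((n:ℝ)+1) := by
      push_cast at hlt
      exact hlt
    rw [lt_div_iff₀ hposn1] at hlt'
    linarith
  have hbound := hA n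
  have hm0 : (0:ℝ) ≤ (m:ℝ) := Nat.cast_nonneg m
  have hden : (0:ℝ) < ((n:ℝ)+1) * ((n:ℝ)+1+2*(m:ℝ)) := by positivity
  rw [div_le_iff₀ hden] at hbound
  have hx1 : (n:ℝ) * (a₂*((n:ℝ)+1)) < (n:ℝ) * Sr :=
    mul_lt_mul_of_pos_left hSr (by linarith)
  have hx2 : (a₂ + 2*(m:ℝ)*p + 1) * ((n:ℝ)+1) < (((n:ℝ)+1)*(a₂ - p)) * ((n:ℝ)+1) :=
    mul_lt_mul_of_pos_right hkey hposn1
  nlinarith [hx1, hx2, hbound, hp0, hm0, hnr]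

end Stmt7


/-- entropy case: with the specification property and a non-transitive
point `z₀`, either `E(z₀) = ∅` or the Bowen entropy `h^B(T, E(z₀)) = P(E(z₀), 0)`
equals the topological entropy `h_top(T) = P_top(0)`. -/
theorem stmt7 {X : Type*} [MetricSpace X] [CompactSpace X]
    (T : X → X) (hT : Continuous T) (hspec : Specification T)
    (z₀ : X) (hz₀ : closure (Set.range fun n : ℕ => T^[n] z₀) ≠ Set.univ) :
    Eset T z₀ = ∅ ∨ ppPressure T (fun _ => (0 : ℝ)) (Eset T z₀) = Ptop T (fun _ => (0 : ℝ)) := by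
  classical
  refine Or.inr ?_
  have hne : Nonempty X := ⟨z₀⟩
  open Stmt7 in
  -- choose a point `w` away from the orbit closure of `z₀`
  obtain ⟨w, hw0⟩ : ∃ w : X, w ∉ closure (Set.range fun s : ℕ => T^[s] z₀) := by
    by_contra h
    push_neg at h
    exact hz₀ (Set.eq_univ_of_forall h)
  obtain ⟨η, hη, hball⟩ := Metric.isOpen_iff.1 (isClosed_closure.isOpen_compl) w hw0
  have hw : ∀ s : ℕ, η ≤ dist (T^[s] z₀) w := by
    intro s
    by_contra hlt
    push_neg at hlt
    have h1 : T^[s] z₀ ∈ Metric.ball w η := by rwa [Metric.mem_ball]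
    exact hball h1 (subset_closure ⟨s, rfl⟩)
  have hPt : Ptop T (fun _ => (0:ℝ)) = limsup (fun ε => Stmt7.hsc T ε) (𝓝[>] (0:ℝ)) := rfl
  rw [ppPressure, hPt, Filter.limsup_eq, Filter.limsup_eq]
  congr 1
  ext a
  simp only [Set.mem_setOf_eq]
  have htend5 : Tendsto (fun ε' : ℝ => ε'/5) (𝓝[>] (0:ℝ)) (𝓝[>] (0:ℝ)) := by
    refine tendsto_nhdsWithin_of_tendsto_nhds_of_eventually_within _ ?_ ?_
    · have : Tendsto (fun ε' : ℝ => ε'/5) (𝓝 (0:ℝ)) (𝓝 ((0:ℝ)/5)) :=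
        (continuous_id.div_const 5).tendsto 0
      simpa using this.mono_left nhdsWithin_le_nhds
    · filter_upwards [self_mem_nhdsWithin] with x hx
      have : (0:ℝ) < x := hx
      exact Set.mem_Ioi.2 (by linarith)
  have htend2 : Tendsto (fun ε' : ℝ => ε'/2) (𝓝[>] (0:ℝ)) (𝓝[>] (0:ℝ)) := by
    refine tendsto_nhdsWithin_of_tendsto_nhds_of_eventually_within _ ?_ ?_
    · have : Tendsto (fun ε' : ℝ => ε'/2) (𝓝 (0:ℝ)) (𝓝 ((0:ℝ)/2)) :=
        (continuous_id.div_const 2).tendsto 0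
      simpa using this.mono_left nhdsWithin_le_nhds
    · filter_upwards [self_mem_nhdsWithin] with x hx
      have : (0:ℝ) < x := hx
      exact Set.mem_Ioi.2 (by linarith)
  constructor
  · -- from pressure bound to entropy bound
    intro hev
    have hev2 := htend5.eventually hev
    have hsmall : ∀ᶠ ε' in 𝓝[>] (0:ℝ), ε' < 5*η := by
      have : Set.Ioo (0:ℝ) (5*η) ∈ 𝓝[>] (0:ℝ) :=
        Ioo_mem_nhdsGT_of_mem ⟨le_refl _, by linarith⟩
      filter_upwards [this] with x hx
      exact hx.2
    filter_upwards [hev2, hsmall, self_mem_nhdsWithin] with ε' h1 h2 h3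
    have hε'pos : (0:ℝ) < ε' := h3
    have hkey := Stmt7.hsc_le_ppPressureAt T hT hspec hw
      (ε := ε'/5) (by linarith) (by linarith)
    rw [show 5*(ε'/5) = ε' by ring] at hkey
    exact le_trans hkey h1
  · -- from entropy bound to pressure bound
    intro hev
    have hev2 := htend2.eventually hev
    filter_upwards [hev2, self_mem_nhdsWithin] with ε' h1 h3
    have hε'pos : (0:ℝ) < ε' := h3
    exact le_trans (Stmt7.ppPressureAt_le_hsc T hε'pos _) h1
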